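/- Let ⟨·,·⟩ be the standard Hermitian symplectic form on ℂ^{2d} (conjugate-linear in the first argument, with ⟨φ,ψ⟩ = −conj(⟨ψ,φ⟩)), defined by ⟨e_i, e_{d+i}⟩ = 1 and ⟨e_i,e_j⟩ = 0 for |i−j| ≠ d. Suppose A preserves this form, v is an eigenvector of A with eigenvalue λ of modulus 1, and w is a vector with Aw − λw a nonzero multiple of v. Then ⟨v,v⟩ = 0. -/

import Mathlib

open Matrix

/-- The standard symplectic form matrix `J = [[0, I],[-I, 0]]` in `d×d` blocks. -/
def Jmat (d : ℕ) : Matrix (Fin d ⊕ Fin d) (Fin d ⊕ Fin d) ℂ :=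
  fromBlocks 0 1 (-1) 0

/-- The standard Hermitian symplectic form on `ℂ^{2d}`: `⟨φ,ψ⟩ = φᴴJψ`, conjugate-linear
in the first argument; it satisfies `⟨e_i, e_{d+i}⟩ = 1` and `⟨e_i,e_j⟩ = 0` for
`|i−j| ≠ d`, and `⟨φ,ψ⟩ = −conj(⟨ψ,φ⟩)`. -/
noncomputable def hsForm (d : ℕ) (φ ψ : (Fin d ⊕ Fin d) → ℂ) : ℂ :=
  star φ ⬝ᵥ (Jmat d *ᵥ ψ)

lemma hsForm_smul_left (d : ℕ) (a : ℂ) (φ ψ : (Fin d ⊕ Fin d) → ℂ) :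
    hsForm d (a • φ) ψ = (starRingEnd ℂ) a * hsForm d φ ψ := by
  simp [hsForm, star_smul, smul_dotProduct, smul_eq_mul]

lemma hsForm_add_right (d : ℕ) (φ ψ χ : (Fin d ⊕ Fin d) → ℂ) :
    hsForm d φ (ψ + χ) = hsForm d φ ψ + hsForm d φ χ := by
  simp [hsForm, mulVec_add, dotProduct_add]

lemma hsForm_smul_right (d : ℕ) (a : ℂ) (φ ψ : (Fin d ⊕ Fin d) → ℂ) :
    hsForm d φ (a • ψ) = a * hsForm d φ ψ := by
  simp [hsForm, mulVec_smul, dotProduct_smul, smul_eq_mul]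

/-- If `A` preserves the Hermitian symplectic form, `v` is an eigenvector of `A` with
eigenvalue `λ` of modulus 1, and `Aw − λw` is a nonzero multiple of `v`, then
`⟨v,v⟩ = 0`. -/
theorem eigenvector_isotropic (d : ℕ) (A : Matrix (Fin d ⊕ Fin d) (Fin d ⊕ Fin d) ℂ)
    (hA : ∀ φ ψ : (Fin d ⊕ Fin d) → ℂ, hsForm d (A *ᵥ φ) (A *ᵥ ψ) = hsForm d φ ψ)
    (lam : ℂ) (hlam : ‖lam‖ = 1) (v w : (Fin d ⊕ Fin d) → ℂ)
    (hv : A *ᵥ v = lam • v)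
    (hw : ∃ c : ℂ, c ≠ 0 ∧ A *ᵥ w - lam • w = c • v) :
    hsForm d v v = 0 := by
  obtain ⟨c, hc, hcw⟩ := hw
  have hAw : A *ᵥ w = lam • w + c • v := by
    have := hcw
    linear_combination (norm := (funext i; simp [Pi.add_apply, Pi.sub_apply]; ring_nf)) this
  have key := hA v w
  rw [hv, hAw, hsForm_add_right, hsForm_smul_left, hsForm_smul_left, hsForm_smul_right,
    hsForm_smul_right] at key
  have hlc : (starRingEnd ℂ) lam * lam = 1 := by
    rw [mul_comm, Complex.mul_conj]
    norm_cast
    simp [← Complex.sq_norm, hlam]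
  have : (starRingEnd ℂ) lam * c * hsForm d v v = 0 := by
    rw [mul_assoc]
    linear_combination key - (hsForm d v w) * hlc + ((starRingEnd ℂ) lam * lam - 1) * hsForm d v w
  have hne : (starRingEnd ℂ) lam * c ≠ 0 := by
    apply mul_ne_zero _ hc
    simp only [ne_eq, map_eq_zero]
    intro h
    rw [h] at hlam; simp at hlam
  exact (mul_eq_zero.mp this).resolve_left hne
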